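/- For every minimum-cover instance (S, C₁,…,C_n, K) and all reals α, β > 0, the constructed instance for sacrificing return for less volatility satisfies: there exist at most K of the sets C₁,…,C_n whose union is S if and only if there exists a subset T ⊆ {1,…,m} with |T| = k that meets both the performance bound and the volatility bound. -/

import Mathlib

/-- Price-weighted index of the set of stocks `T` at time `t`,
given prices `Sp`. -/
noncomputable def phi1 (Sp : ℕ → ℕ → ℝ) (T : Finset ℕ) (t : ℕ) : ℝ :=
  (∑ i ∈ T, Sp i t) / T.card

/-- One-period return of the set of stocks `T` at time `t ≥ 1`. -/
noncomputable def ret (Sp : ℕ → ℕ → ℝ) (T : Finset ℕ) (t : ℕ) : ℝ :=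
  Real.log (phi1 Sp T t / phi1 Sp T (t - 1))

/-- Average return of the set of stocks `T` up to time `t ≥ 1`. -/
noncomputable def avgRet (Sp : ℕ → ℕ → ℝ) (T : Finset ℕ) (t : ℕ) : ℝ :=
  (∑ i ∈ Finset.Icc 1 t, ret Sp T i) / t

/-- Volatility of the set of stocks `T` up to time `t ≥ 2`. -/
noncomputable def vol (Sp : ℕ → ℕ → ℝ) (T : Finset ℕ) (t : ℕ) : ℝ :=
  Real.sqrt ((∑ i ∈ Finset.Icc 1 t, (ret Sp T i - avgRet Sp T t) ^ 2) /
    ((t : ℝ) - 1))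

lemma aux_sum_sq_dev_le (s : Finset ℕ) (x : ℕ → ℝ) :
    ∑ i ∈ s, (x i - (∑ j ∈ s, x j) / s.card) ^ 2 ≤ ∑ i ∈ s, (x i) ^ 2 := by
  rcases s.eq_empty_or_nonempty with rfl | hs
  · simp
  have hc : (0:ℝ) < s.card := by exact_mod_cast Finset.card_pos.mpr hs
  set μ := (∑ j ∈ s, x j) / s.card with hμ
  have hsum : ∑ j ∈ s, x j = (s.card : ℝ) * μ := by rw [hμ]; field_simp
  have hexp : ∑ i ∈ s, (x i - μ) ^ 2 = ∑ i ∈ s, (x i)^2 - s.card * μ^2 := by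
    have h1 : ∀ i ∈ s, (x i - μ)^2 = (x i)^2 - 2*μ*(x i) + μ^2 := fun i _ => by ring
    rw [Finset.sum_congr rfl h1, Finset.sum_add_distrib, Finset.sum_sub_distrib,
      ← Finset.mul_sum, hsum, Finset.sum_const, nsmul_eq_mul]
    ring
  rw [hexp]
  nlinarith [sq_nonneg μ]

set_option maxHeartbeats 1000000 in
theorem stmt_8
    -- the minimum-cover instance
    (s n K : ℕ) (hs : 1 ≤ s) (C : ℕ → Finset ℕ)
    (hC : ∀ i ∈ Finset.Icc 1 n, C i ⊆ Finset.Icc 1 s)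
    (hK2 : 2 ≤ K) (hKn : K < n)
    -- the performance and volatility parameters
    (α β : ℝ) (hα : 0 < α) (hβ : 0 < β)
    -- constants of the construction
    (k P q B m f : ℕ) (hk : k = K)
    (hP : P = max (2 * (k + 1)) (2 * s))
    (hq : (q : ℤ) = ⌈max (1 + 4 / β) (Real.log (2 / α) / Real.log k)⌉)
    (hB : (B : ℤ) = ⌈α * (k : ℝ) ^ q⌉)
    (hm : m = n * B) (hf : f = P + s)
    (v₁ v₂ : ℝ) (hv₁ : v₁ = (B : ℝ) - 1) (hv₂ : v₂ = (k : ℝ) * ((B : ℝ) - 1))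
    -- the constructed prices
    (Sp : ℕ → ℕ → ℝ)
    (h0 : ∀ i ∈ Finset.Icc 1 m, Sp i 0 = v₁)
    (hpad1 : ∀ t, 1 ≤ t → t ≤ P → ∀ i ∈ Finset.Icc 1 n, Sp i t = v₁)
    (hpadEven : ∀ t, 1 ≤ t → t ≤ P → t % 2 = 0 →
      Sp (min (n + t / 2) m) t =
        ((m : ℝ) - n) * ((⌊(B : ℝ) / α⌋ : ℤ) - 1) ∧
      ∀ i, n < i → i ≤ m → i ≠ min (n + t / 2) m → Sp i t = 0)
    (hpadOdd : ∀ t, 1 ≤ t → t ≤ P → t % 2 = 1 →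
      ∀ i, n < i → i ≤ m → Sp i t = 0)
    (hcode : ∀ t, P < t → t ≤ f →
      (∀ i ∈ Finset.Icc 1 n, Sp i t = if t - P ∈ C i then v₂ else 0) ∧
      (∀ i, n < i → i < m → Sp i t = 0) ∧
      Sp m t = ((m : ℝ) - n) * ((⌊(B : ℝ) / α⌋ : ℤ) - (k : ℝ)) +
        (((Finset.Icc 1 n).filter (fun i => t - P ∉ C i)).card : ℝ) * v₂) :
    -- statement 8
    (∃ I ⊆ Finset.Icc 1 n, I.card ≤ K ∧
        ∀ j ∈ Finset.Icc 1 s, ∃ i ∈ I, j ∈ C i) ↔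
      (∃ T ⊆ Finset.Icc 1 m, T.card = k ∧
        (∀ t ∈ Finset.Icc 1 f,
          phi1 Sp T t / phi1 Sp T 0 ≥
            α * (phi1 Sp (Finset.Icc 1 m) t / phi1 Sp (Finset.Icc 1 m) 0)) ∧
        (∀ t ∈ Finset.Icc 2 f,
          vol Sp T t ≤ β * vol Sp (Finset.Icc 1 m) t)) := by
  classical
  -- ### basic numeric facts
  have hk2 : 2 ≤ k := hk ▸ hK2
  have hkn : k < n := hk ▸ hKn
  have hn3 : 3 ≤ n := by omega
  have hkR : (2:ℝ) ≤ (k:ℝ) := by exact_mod_cast hk2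
  have hk0 : (0:ℝ) < (k:ℝ) := by linarith
  have hqmax : (max (1 + 4 / β) (Real.log (2 / α) / Real.log k) : ℝ) ≤ q := by
    have h := Int.le_ceil (max (1 + 4 / β) (Real.log (2 / α) / Real.log k))
    rw [← hq] at h
    exact_mod_cast h
  have hqβ : 1 + 4/β ≤ (q:ℝ) := le_trans (le_max_left _ _) hqmax
  have h4β : (0:ℝ) < 4/β := by positivity
  have hq1 : (1:ℝ) ≤ (q:ℝ) := by linarith
  have hqn1 : 1 ≤ q := by exact_mod_cast hq1
  have hlogk : 0 < Real.log k := Real.log_pos (by linarith)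
  -- k^q ≥ 2/α
  have hkqpos : (0:ℝ) < (k:ℝ)^q := by positivity
  have hkq2 : 2/α ≤ (k:ℝ)^q := by
    have h1 : Real.log (2/α) / Real.log k ≤ (q:ℝ) := le_trans (le_max_right _ _) hqmax
    have h2 : Real.log (2/α) ≤ (q:ℝ) * Real.log k := by
      rw [div_le_iff₀ hlogk] at h1; linarith
    have h3 : Real.log (2/α) ≤ Real.log ((k:ℝ)^q) := by
      rw [Real.log_pow]; exact h2
    exact (Real.log_le_log_iff (by positivity) hkqpos).mp h3
  have hBreal : α * (k:ℝ)^q ≤ (B:ℝ) := by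
    have h := Int.le_ceil (α * (k:ℝ)^q)
    rw [← hB] at h
    exact_mod_cast h
  have hαkq2 : (2:ℝ) ≤ α * (k:ℝ)^q := by
    rw [div_le_iff₀ hα] at hkq2; linarith [hkq2]
  have hB2 : (2:ℝ) ≤ (B:ℝ) := le_trans hαkq2 hBreal
  have hB0 : (0:ℝ) < (B:ℝ) := by linarith
  have hB2n : 2 ≤ B := by exact_mod_cast hB2
  have hv₁pos : 0 < v₁ := by rw [hv₁]; linarith
  have hv₁ne : v₁ ≠ 0 := ne_of_gt hv₁pos
  have hv₂k : v₂ = (k:ℝ) * v₁ := by rw [hv₂, hv₁]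
  -- the floor D
  set Dz : ℤ := ⌊(B : ℝ) / α⌋ with hDz
  set Dr : ℝ := (Dz : ℝ) with hDr
  have hD_le : Dr ≤ (B:ℝ)/α := Int.floor_le _
  have hkq_le : (k:ℝ)^q ≤ (B:ℝ)/α := by
    rw [le_div_iff₀ hα, mul_comm]; exact hBreal
  have hDkq : (k:ℝ)^q ≤ Dr := by
    have h1 : (((k:ℤ)^q : ℤ) : ℝ) ≤ (B:ℝ)/α := by push_cast; exact hkq_le
    have h2 := (Int.le_floor (z := (k:ℤ)^q) (a := (B:ℝ)/α)).mpr h1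
    have h3 : (((k:ℤ)^q : ℤ) : ℝ) ≤ ((⌊(B:ℝ)/α⌋ : ℤ) : ℝ) := by exact_mod_cast h2
    rw [hDr, hDz]
    push_cast at h3 ⊢
    linarith
  have hkq_self : (k:ℝ) ≤ (k:ℝ)^q := by
    calc (k:ℝ) = (k:ℝ)^1 := (pow_one _).symm
    _ ≤ (k:ℝ)^q := pow_le_pow_right₀ (by linarith) hqn1
  have hkq4 : (4:ℝ) ≤ (k:ℝ)^q := by
    have hq2 : 2 ≤ q := by
      have h1 : (1:ℝ) < (q:ℝ) := by linarith [hqβ]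
      have h2 : 1 < q := by exact_mod_cast h1
      omega
    calc (4:ℝ) = 2^2 := by norm_num
    _ ≤ (k:ℝ)^2 := by exact pow_le_pow_left₀ (by norm_num) hkR 2
    _ ≤ (k:ℝ)^q := pow_le_pow_right₀ (by linarith) hq2
  have hDk : (k:ℝ) ≤ Dr := le_trans hkq_self hDkq
  have hD4 : (4:ℝ) ≤ Dr := le_trans hkq4 hDkq
  have hD0 : (0:ℝ) < Dr := by linarith
  have hαD_le_B : α * Dr ≤ (B:ℝ) := by
    rw [mul_comm, ← le_div_iff₀ hα]; exact hD_le
  have hone_kq : (1:ℝ) ≤ (k:ℝ)^q := by linarith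
  have hα_le_B : α ≤ (B:ℝ) := by
    have h1 : α * 1 ≤ α * (k:ℝ)^q := mul_le_mul_of_nonneg_left hone_kq hα.le
    linarith
  have hαkB : (k:ℝ) * α ≤ (B:ℝ) := by
    have h1 : α * (k:ℝ) ≤ α * (k:ℝ)^q := mul_le_mul_of_nonneg_left hkq_self hα.le
    linarith
  have hD_gt : (B:ℝ)/α - 1 < Dr := Int.sub_one_lt_floor _
  have hαD_gt : (B:ℝ) - α < α * Dr := by
    have := mul_lt_mul_of_pos_left hD_gt hα
    calc (B:ℝ) - α = α * ((B:ℝ)/α - 1) := by field_simp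
    _ < α * Dr := this
  have hkey : ((k:ℝ) - 1) * B < (k:ℝ) * (α * Dr) := by
    have h1 : (k:ℝ) * ((B:ℝ) - α) < (k:ℝ) * (α * Dr) :=
      mul_lt_mul_of_pos_left hαD_gt hk0
    nlinarith [hαkB]
  -- m facts
  have hnm : n < m := by
    have : n * 2 ≤ n * B := Nat.mul_le_mul_left n hB2n
    omega
  have hm0 : 0 < m := by omega
  have hmR : (m:ℝ) = (n:ℝ) * B := by rw [hm]; push_cast; ring
  have hmn_v : (m:ℝ) - (n:ℝ) = (n:ℝ) * v₁ := by rw [hmR, hv₁]; ring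
  have hn0 : (0:ℝ) < (n:ℝ) := by positivity
  -- P facts
  set u := max (k+1) s with hu
  have hPu : P = 2 * u := by rw [hP, hu]; omega
  have hu3 : 3 ≤ u := by omega
  have hus : s ≤ u := le_max_right _ _
  have huk : k + 1 ≤ u := le_max_left _ _
  have hfPs : f = P + s := hf
  -- ### sums of prices
  have hIccIoc : ∀ x : ℕ, Finset.Icc 1 x = Finset.Ioc 0 x := fun x => Finset.Icc_add_one_left_eq_Ioc 0 x
  have hsplit : ∀ (g : ℕ → ℝ), ∑ i ∈ Finset.Icc 1 m, g i =
      (∑ i ∈ Finset.Icc 1 n, g i) + ∑ i ∈ Finset.Ioc n m, g i := by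
    intro g
    rw [hIccIoc m, hIccIoc n, Finset.sum_Ioc_consecutive _ (Nat.zero_le n) (le_of_lt hnm)]
  have hcardIcc : ∀ x : ℕ, (Finset.Icc 1 x).card = x := by
    intro x; rw [Nat.card_Icc]; omega
  -- sum over a subset of the coding rows, padding column
  have hSTpad : ∀ T' : Finset ℕ, T' ⊆ Finset.Icc 1 n → ∀ t, 1 ≤ t → t ≤ P →
      ∑ i ∈ T', Sp i t = (T'.card : ℝ) * v₁ := by
    intro T' hT' t ht1 ht2
    rw [Finset.sum_congr rfl (fun i hi => hpad1 t ht1 ht2 i (hT' hi)),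
      Finset.sum_const, nsmul_eq_mul]
  have hST0 : ∀ T' : Finset ℕ, T' ⊆ Finset.Icc 1 m →
      ∑ i ∈ T', Sp i 0 = (T'.card : ℝ) * v₁ := by
    intro T' hT'
    rw [Finset.sum_congr rfl (fun i hi => h0 i (hT' hi)), Finset.sum_const, nsmul_eq_mul]
  have hSTcode : ∀ j, 1 ≤ j → j ≤ s → ∀ T' : Finset ℕ, T' ⊆ Finset.Icc 1 n →
      ∑ i ∈ T', Sp i (P + j) = ((T'.filter (fun i => j ∈ C i)).card : ℝ) * v₂ := by
    intro j hj1 hj2 T' hT'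
    have hc := (hcode (P + j) (by omega) (by omega)).1
    have hstep : ∀ i ∈ T', Sp i (P + j) = if j ∈ C i then v₂ else 0 := by
      intro i hi
      have := hc i (hT' hi)
      simpa [Nat.add_sub_cancel_left] using this
    rw [Finset.sum_congr rfl hstep, ← Finset.sum_filter, Finset.sum_const, nsmul_eq_mul]
  -- market sums
  have hM0 : ∑ i ∈ Finset.Icc 1 m, Sp i 0 = (m:ℝ) * v₁ := by
    rw [hST0 _ (le_refl _), hcardIcc]
  have hModd : ∀ t, 1 ≤ t → t ≤ P → t % 2 = 1 →
      ∑ i ∈ Finset.Icc 1 m, Sp i t = (n:ℝ) * v₁ := by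
    intro t ht1 ht2 ht3
    rw [hsplit, hSTpad _ (le_refl _) t ht1 ht2, hcardIcc]
    have hz : ∑ i ∈ Finset.Ioc n m, Sp i t = 0 := by
      apply Finset.sum_eq_zero
      intro i hi
      rw [Finset.mem_Ioc] at hi
      exact hpadOdd t ht1 ht2 ht3 i hi.1 hi.2
    rw [hz, add_zero]
  have hMeven : ∀ t, 1 ≤ t → t ≤ P → t % 2 = 0 →
      ∑ i ∈ Finset.Icc 1 m, Sp i t = (n:ℝ) * v₁ * Dr := by
    intro t ht1 ht2 ht3
    rw [hsplit, hSTpad _ (le_refl _) t ht1 ht2, hcardIcc]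
    have hrmem : min (n + t / 2) m ∈ Finset.Ioc n m := by
      rw [Finset.mem_Ioc]
      constructor
      · apply lt_min _ hnm
        omega
      · exact min_le_right _ _
    have hz : ∑ i ∈ Finset.Ioc n m, Sp i t = ((m:ℝ) - n) * (Dr - 1) := by
      rw [Finset.sum_eq_single_of_mem _ hrmem]
      · exact (hpadEven t ht1 ht2 ht3).1
      · intro i hi hne
        rw [Finset.mem_Ioc] at hi
        exact (hpadEven t ht1 ht2 ht3).2 i hi.1 hi.2 hne
    rw [hz, hmn_v]
    ring
  have hMcode : ∀ j, 1 ≤ j → j ≤ s →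
      ∑ i ∈ Finset.Icc 1 m, Sp i (P + j) = (n:ℝ) * v₁ * Dr := by
    intro j hj1 hj2
    have hc := hcode (P + j) (by omega) (by omega)
    rw [hsplit, hSTcode j hj1 hj2 _ (le_refl _)]
    have hz : ∑ i ∈ Finset.Ioc n m, Sp i (P + j) =
        ((m:ℝ) - n) * (Dr - k) +
          (((Finset.Icc 1 n).filter (fun i => j ∉ C i)).card : ℝ) * v₂ := by
      rw [Finset.sum_eq_single_of_mem m (by rw [Finset.mem_Ioc]; exact ⟨hnm, le_refl m⟩)]
      · have := hc.2.2
        simpa [Nat.add_sub_cancel_left] using this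
      · intro i hi hne
        rw [Finset.mem_Ioc] at hi
        exact hc.2.1 i hi.1 (lt_of_le_of_ne hi.2 hne)
    rw [hz]
    have hcards : (((Finset.Icc 1 n).filter (fun i => j ∈ C i)).card : ℝ) +
        (((Finset.Icc 1 n).filter (fun i => j ∉ C i)).card : ℝ) = (n:ℝ) := by
      have h := Finset.card_filter_add_card_filter_not
        (s := Finset.Icc 1 n) (p := fun i => j ∈ C i)
      rw [hcardIcc] at h
      exact_mod_cast h
    rw [hmn_v, hv₂k]
    linear_combination ((k:ℝ) * v₁) * hcards
  -- market phi values
  have hMcard : ((Finset.Icc 1 m).card : ℝ) = (m:ℝ) := by rw [hcardIcc]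
  have hφM0 : phi1 Sp (Finset.Icc 1 m) 0 = v₁ := by
    rw [phi1, hM0, hMcard]
    field_simp
  have hφModd : ∀ t, 1 ≤ t → t ≤ P → t % 2 = 1 →
      phi1 Sp (Finset.Icc 1 m) t = v₁ / B := by
    intro t h1 h2 h3
    rw [phi1, hModd t h1 h2 h3, hMcard, hmR]
    field_simp
  have hφMeven : ∀ t, 1 ≤ t → t ≤ P → t % 2 = 0 →
      phi1 Sp (Finset.Icc 1 m) t = v₁ * Dr / B := by
    intro t h1 h2 h3
    rw [phi1, hMeven t h1 h2 h3, hMcard, hmR]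
    field_simp
  have hφMcode : ∀ j, 1 ≤ j → j ≤ s →
      phi1 Sp (Finset.Icc 1 m) (P + j) = v₁ * Dr / B := by
    intro j h1 h2
    rw [phi1, hMcode j h1 h2, hMcard, hmR]
    field_simp
  constructor
  · -- ### forward direction
    rintro ⟨I, hIsub, hIcard, hIcov⟩
    obtain ⟨T, hITsub, hTsub, hTcard⟩ :=
      Finset.exists_subsuperset_card_eq hIsub (by omega : I.card ≤ k)
        (by rw [hcardIcc]; omega)
    have hTm : T ⊆ Finset.Icc 1 m := by
      intro i hi
      have := hTsub hi
      rw [Finset.mem_Icc] at this ⊢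
      omega
    have hTcardR : ((T.card : ℕ) : ℝ) = (k:ℝ) := by rw [hTcard]
    -- phi values for T
    have hφT0 : phi1 Sp T 0 = v₁ := by
      rw [phi1, hST0 T hTm, hTcardR]
      field_simp
    have hφTpad : ∀ t, 1 ≤ t → t ≤ P → phi1 Sp T t = v₁ := by
      intro t h1 h2
      rw [phi1, hSTpad T hTsub t h1 h2, hTcardR]
      field_simp
    have hφTcode : ∀ j, 1 ≤ j → j ≤ s →
        phi1 Sp T (P + j) = ((T.filter (fun i => j ∈ C i)).card : ℝ) * v₁ := by
      intro j h1 h2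
      rw [phi1, hSTcode j h1 h2 T hTsub, hTcardR, hv₂k]
      field_simp
    have hcbound : ∀ j, 1 ≤ j → j ≤ s →
        1 ≤ (T.filter (fun i => j ∈ C i)).card ∧
          (T.filter (fun i => j ∈ C i)).card ≤ k := by
      intro j h1 h2
      constructor
      · obtain ⟨i, hiI, hiC⟩ := hIcov j (Finset.mem_Icc.mpr ⟨h1, h2⟩)
        rw [Nat.one_le_iff_ne_zero, ← Nat.pos_iff_ne_zero, Finset.card_pos]
        exact ⟨i, Finset.mem_filter.mpr ⟨hITsub hiI, hiC⟩⟩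
      · rw [← hTcard]
        exact Finset.card_le_card (Finset.filter_subset _ _)
    refine ⟨T, hTm, hTcard, ?_, ?_⟩
    · -- performance bound
      intro t ht
      rw [Finset.mem_Icc] at ht
      rw [hφT0, hφM0]
      by_cases hP' : t ≤ P
      · rw [hφTpad t ht.1 hP']
        rcases Nat.even_or_odd t with he | ho
        · have h3 : t % 2 = 0 := Nat.even_iff.mp he
          rw [hφMeven t ht.1 hP' h3]
          have : α * (v₁ * Dr / B / v₁) = α * Dr / B := by field_simp
          rw [this, div_self hv₁ne, ge_iff_le, div_le_one hB0]
          linarith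
        · have h3 : t % 2 = 1 := Nat.odd_iff.mp ho
          rw [hφModd t ht.1 hP' h3]
          have : α * (v₁ / B / v₁) = α / B := by field_simp
          rw [this, div_self hv₁ne, ge_iff_le, div_le_one hB0]
          linarith
      · push_neg at hP'
        set j := t - P with hj
        have htj : t = P + j := by omega
        have hj1 : 1 ≤ j := by omega
        have hj2 : j ≤ s := by omega
        rw [htj, hφTcode j hj1 hj2, hφMcode j hj1 hj2]
        have h1 : ((T.filter (fun i => j ∈ C i)).card : ℝ) * v₁ / v₁ =
            ((T.filter (fun i => j ∈ C i)).card : ℝ) := mul_div_cancel_right₀ _ hv₁ne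
        have h2 : α * (v₁ * Dr / B / v₁) = α * Dr / B := by field_simp
        rw [h1, h2, ge_iff_le]
        have hc1 : (1:ℝ) ≤ ((T.filter (fun i => j ∈ C i)).card : ℝ) := by
          exact_mod_cast (hcbound j hj1 hj2).1
        calc α * Dr / B ≤ 1 := by rw [div_le_one hB0]; linarith
        _ ≤ _ := hc1
    · -- volatility bound
      have hBne : (B:ℝ) ≠ 0 := ne_of_gt hB0
      have hDne : Dr ≠ 0 := ne_of_gt hD0
      -- phi values of T lie in [v₁, k v₁] at all times ≤ f
      have hφTpos : ∀ t, t ≤ f → v₁ ≤ phi1 Sp T t ∧ phi1 Sp T t ≤ (k:ℝ) * v₁ := by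
        intro t ht
        rcases Nat.eq_zero_or_pos t with h1 | h1
        · subst h1
          rw [hφT0]
          have hh := mul_le_mul_of_nonneg_right hkR hv₁pos.le
          constructor
          · exact le_rfl
          · linarith
        by_cases h2 : t ≤ P
        · rw [hφTpad t h1 h2]
          have hh := mul_le_mul_of_nonneg_right hkR hv₁pos.le
          constructor
          · exact le_rfl
          · linarith
        · push_neg at h2
          have htj : t = P + (t - P) := by omega
          have hj1 : 1 ≤ t - P := by omega
          have hj2 : t - P ≤ s := by omega
          rw [htj, hφTcode (t - P) hj1 hj2]
          obtain ⟨hc1, hc2⟩ := hcbound (t - P) hj1 hj2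
          have hc1R : (1:ℝ) ≤ ((T.filter (fun i => (t-P) ∈ C i)).card : ℝ) := by
            exact_mod_cast hc1
          have hc2R : ((T.filter (fun i => (t-P) ∈ C i)).card : ℝ) ≤ (k:ℝ) := by
            exact_mod_cast hc2
          have hh1 := mul_le_mul_of_nonneg_right hc1R hv₁pos.le
          have hh2 := mul_le_mul_of_nonneg_right hc2R hv₁pos.le
          constructor
          · linarith
          · linarith
      -- returns of T vanish on the padding columns
      have hretT0 : ∀ i, 1 ≤ i → i ≤ P → ret Sp T i = 0 := by
        intro i h1 h2
        have ha : phi1 Sp T i = v₁ := hφTpad i h1 h2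
        have hb : phi1 Sp T (i - 1) = v₁ := by
          rcases Nat.eq_or_lt_of_le h1 with h | h
          · rw [← h]
            exact hφT0
          · exact hφTpad (i - 1) (by omega) (by omega)
        rw [ret, ha, hb, div_self hv₁ne, Real.log_one]
      -- returns of T are bounded by log k on the coding columns
      have hretTabs : ∀ i, P < i → i ≤ f → |ret Sp T i| ≤ Real.log k := by
        intro i h1 h2
        obtain ⟨hia, hib⟩ := hφTpos i h2
        obtain ⟨hja, hjb⟩ := hφTpos (i - 1) (by omega)
        have hpos : 0 < phi1 Sp T i := lt_of_lt_of_le hv₁pos hia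
        have hpos1 : 0 < phi1 Sp T (i - 1) := lt_of_lt_of_le hv₁pos hja
        rw [ret, abs_le, Real.log_div (ne_of_gt hpos) (ne_of_gt hpos1)]
        have hl1 : Real.log (phi1 Sp T i) ≤ Real.log ((k:ℝ) * v₁) :=
          Real.log_le_log hpos hib
        have hl2 : Real.log v₁ ≤ Real.log (phi1 Sp T i) :=
          Real.log_le_log hv₁pos hia
        have hl3 : Real.log (phi1 Sp T (i-1)) ≤ Real.log ((k:ℝ) * v₁) :=
          Real.log_le_log hpos1 hjb
        have hl4 : Real.log v₁ ≤ Real.log (phi1 Sp T (i-1)) :=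
          Real.log_le_log hv₁pos hja
        have hlkv : Real.log ((k:ℝ) * v₁) = Real.log k + Real.log v₁ :=
          Real.log_mul (ne_of_gt hk0) hv₁ne
        constructor
        · linarith
        · linarith
      -- market returns on padding columns
      have hretM_even : ∀ i, 1 ≤ i → i ≤ u →
          ret Sp (Finset.Icc 1 m) (2*i) = Real.log Dr := by
        intro i h1 h2
        have he : phi1 Sp (Finset.Icc 1 m) (2*i) = v₁ * Dr / B :=
          hφMeven (2*i) (by omega) (by omega) (by omega)
        have ho : phi1 Sp (Finset.Icc 1 m) (2*i - 1) = v₁ / B :=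
          hφModd (2*i - 1) (by omega) (by omega) (by omega)
        rw [ret, he, ho]
        have hq : v₁ * Dr / B / (v₁ / B) = Dr := by
          field_simp
        rw [hq]
      have hretM_odd : ∀ i, 1 ≤ i → i ≤ u - 1 →
          ret Sp (Finset.Icc 1 m) (2*i+1) = - Real.log Dr := by
        intro i h1 h2
        have ho : phi1 Sp (Finset.Icc 1 m) (2*i+1) = v₁ / B :=
          hφModd (2*i+1) (by omega) (by omega) (by omega)
        have he : phi1 Sp (Finset.Icc 1 m) (2*i+1-1) = v₁ * Dr / B := by
          have h3 : 2*i+1-1 = 2*i := by omega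
          rw [h3]
          exact hφMeven (2*i) (by omega) (by omega) (by omega)
        rw [ret, ho, he]
        have hq : v₁ / B / (v₁ * Dr / B) = Dr⁻¹ := by
          field_simp
        rw [hq, Real.log_inv]
      -- the quantity a = log D
      have ha_pos : 0 < Real.log Dr := Real.log_pos (by linarith)
      have ha_qlogk : (q:ℝ) * Real.log k ≤ Real.log Dr := by
        calc (q:ℝ) * Real.log k = Real.log ((k:ℝ)^q) := by rw [Real.log_pow]
        _ ≤ Real.log Dr := Real.log_le_log hkqpos hDkq
      have hlogk_a : 4 * Real.log k ≤ β * Real.log Dr := by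
        have h1 : 4/β ≤ (q:ℝ) := by linarith
        have h2 : (4/β) * Real.log k ≤ (q:ℝ) * Real.log k :=
          mul_le_mul_of_nonneg_right h1 hlogk.le
        have h3 : β * ((4/β) * Real.log k) ≤ β * Real.log Dr :=
          mul_le_mul_of_nonneg_left (by linarith) hβ.le
        have h4 : β * ((4/β) * Real.log k) = 4 * Real.log k := by
          field_simp
        linarith
      -- now the actual bound
      intro t ht
      rw [Finset.mem_Icc] at ht
      by_cases htP : t ≤ P
      · -- volatility of T is zero
        have hz : ∀ i ∈ Finset.Icc 1 t, ret Sp T i = 0 := by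
          intro i hi
          rw [Finset.mem_Icc] at hi
          exact hretT0 i hi.1 (le_trans hi.2 htP)
        have havg : avgRet Sp T t = 0 := by
          rw [avgRet, Finset.sum_congr rfl hz]
          simp
        have hvz : vol Sp T t = 0 := by
          rw [vol, havg]
          have : ∀ i ∈ Finset.Icc 1 t, (ret Sp T i - 0)^2 = 0 := by
            intro i hi
            rw [hz i hi]
            ring
          rw [Finset.sum_congr rfl this]
          simp
        rw [hvz]
        exact mul_nonneg hβ.le (by rw [vol]; exact Real.sqrt_nonneg _)
      · push_neg at htP
        simp only [vol]
        set μT := avgRet Sp T t with hμT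
        set μ := avgRet Sp (Finset.Icc 1 m) t with hμ
        set X := ∑ i ∈ Finset.Icc 1 t, (ret Sp T i - μT)^2 with hX
        set Y := ∑ i ∈ Finset.Icc 1 t, (ret Sp (Finset.Icc 1 m) i - μ)^2 with hY
        have htR1 : (2:ℝ) ≤ (t:ℝ) := by exact_mod_cast ht.1
        have ht1pos : (0:ℝ) < (t:ℝ) - 1 := by linarith
        have htub : (t:ℝ) - 1 ≤ 3*(u:ℝ) := by
          have h1 : t ≤ 3*u := by omega
          have h2 : (t:ℝ) ≤ 3*(u:ℝ) := by exact_mod_cast h1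
          linarith
        have htlb : 2*(s:ℝ) ≤ (t:ℝ) - 1 := by
          have h1 : 2*s + 1 ≤ t := by omega
          have h2 : (2*(s:ℝ)) + 1 ≤ (t:ℝ) := by exact_mod_cast h1
          linarith
        -- upper bound for X
        have hXle : X ≤ ∑ i ∈ Finset.Icc 1 t, (ret Sp T i)^2 := by
          rw [hX, hμT]
          have hav : avgRet Sp T t =
              (∑ j ∈ Finset.Icc 1 t, ret Sp T j) / ((Finset.Icc 1 t).card : ℝ) := by
            rw [avgRet, hcardIcc]
          rw [hav]
          exact aux_sum_sq_dev_le _ _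
        have hsq : ∑ i ∈ Finset.Icc 1 t, (ret Sp T i)^2 ≤ (s:ℝ) * (Real.log k)^2 := by
          rw [hIccIoc t, ← Finset.sum_Ioc_consecutive _ (Nat.zero_le P) (le_of_lt htP)]
          have h1 : ∑ i ∈ Finset.Ioc 0 P, (ret Sp T i)^2 = 0 := by
            apply Finset.sum_eq_zero
            intro i hi
            rw [Finset.mem_Ioc] at hi
            rw [hretT0 i hi.1 hi.2]
            ring
          rw [h1, zero_add]
          calc ∑ i ∈ Finset.Ioc P t, (ret Sp T i)^2
              ≤ ∑ _i ∈ Finset.Ioc P t, (Real.log k)^2 := by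
                apply Finset.sum_le_sum
                intro i hi
                rw [Finset.mem_Ioc] at hi
                have habs := hretTabs i hi.1 (le_trans hi.2 ht.2)
                rw [abs_le] at habs
                exact sq_le_sq' habs.1 habs.2
          _ = ((t - P : ℕ):ℝ) * (Real.log k)^2 := by
                rw [Finset.sum_const, Nat.card_Ioc, nsmul_eq_mul]
          _ ≤ (s:ℝ) * (Real.log k)^2 := by
                have h2 : t - P ≤ s := by omega
                have h3 : ((t - P : ℕ):ℝ) ≤ (s:ℝ) := by exact_mod_cast h2
                exact mul_le_mul_of_nonneg_right h3 (sq_nonneg _)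
        -- lower bound for Y
        have hu1R : (3:ℝ) ≤ (u:ℝ) := by exact_mod_cast hu3
        have hYge : ((u:ℝ) - 1) * (Real.log Dr)^2 ≤ Y := by
          rcases le_or_gt μ 0 with hμ0 | hμ0
          · -- use the even columns
            have hsub : (Finset.Icc 1 u).image (fun i => 2*i) ⊆ Finset.Icc 1 t := by
              intro x hx
              rw [Finset.mem_image] at hx
              obtain ⟨i, hi, rfl⟩ := hx
              rw [Finset.mem_Icc] at hi ⊢
              omega
            have h1 : ∑ i ∈ Finset.Icc 1 u,
                (ret Sp (Finset.Icc 1 m) (2*i) - μ)^2 ≤ Y := by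
              rw [hY, ← Finset.sum_image (g := fun i => 2*i)
                (f := fun i => (ret Sp (Finset.Icc 1 m) i - μ)^2)
                (by intro x _ y _ h; simp only at h; omega)]
              exact Finset.sum_le_sum_of_subset_of_nonneg hsub (fun i _ _ => sq_nonneg _)
            have h2 : ∑ i ∈ Finset.Icc 1 u, (Real.log Dr)^2 ≤
                ∑ i ∈ Finset.Icc 1 u, (ret Sp (Finset.Icc 1 m) (2*i) - μ)^2 := by
              apply Finset.sum_le_sum
              intro i hi
              rw [Finset.mem_Icc] at hi
              rw [hretM_even i hi.1 hi.2]
              exact pow_le_pow_left₀ ha_pos.le (by linarith) 2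
            have h3 : ∑ i ∈ Finset.Icc 1 u, (Real.log Dr)^2 =
                (u:ℝ) * (Real.log Dr)^2 := by
              rw [Finset.sum_const, hcardIcc, nsmul_eq_mul]
            have h4 : ((u:ℝ) - 1) * (Real.log Dr)^2 ≤ (u:ℝ) * (Real.log Dr)^2 :=
              mul_le_mul_of_nonneg_right (by linarith) (sq_nonneg _)
            linarith
          · -- use the odd columns
            have hsub : (Finset.Icc 1 (u-1)).image (fun i => 2*i+1) ⊆ Finset.Icc 1 t := by
              intro x hx
              rw [Finset.mem_image] at hx
              obtain ⟨i, hi, rfl⟩ := hx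
              rw [Finset.mem_Icc] at hi ⊢
              omega
            have h1 : ∑ i ∈ Finset.Icc 1 (u-1),
                (ret Sp (Finset.Icc 1 m) (2*i+1) - μ)^2 ≤ Y := by
              rw [hY, ← Finset.sum_image (g := fun i => 2*i+1)
                (f := fun i => (ret Sp (Finset.Icc 1 m) i - μ)^2)
                (by intro x _ y _ h; simp only at h; omega)]
              exact Finset.sum_le_sum_of_subset_of_nonneg hsub (fun i _ _ => sq_nonneg _)
            have h2 : ∑ i ∈ Finset.Icc 1 (u-1), (Real.log Dr)^2 ≤
                ∑ i ∈ Finset.Icc 1 (u-1), (ret Sp (Finset.Icc 1 m) (2*i+1) - μ)^2 := by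
              apply Finset.sum_le_sum
              intro i hi
              rw [Finset.mem_Icc] at hi
              rw [hretM_odd i hi.1 hi.2]
              have he : (- Real.log Dr - μ)^2 = (Real.log Dr + μ)^2 := by ring
              rw [he]
              exact pow_le_pow_left₀ ha_pos.le (by linarith) 2
            have h3 : ∑ i ∈ Finset.Icc 1 (u-1), (Real.log Dr)^2 =
                ((u:ℝ) - 1) * (Real.log Dr)^2 := by
              rw [Finset.sum_const, hcardIcc, nsmul_eq_mul]
              have h4 : ((u - 1 : ℕ):ℝ) = (u:ℝ) - 1 := by
                have : (1:ℕ) ≤ u := by omega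
                push_cast [Nat.cast_sub this]
                ring
              rw [h4]
            linarith
        -- combine
        have hXfin : X / ((t:ℝ)-1) ≤ (Real.log k)^2 / 2 := by
          have h1 : X ≤ (s:ℝ) * (Real.log k)^2 := le_trans hXle hsq
          have hs1 : (1:ℝ) ≤ (s:ℝ) := by exact_mod_cast hs
          calc X / ((t:ℝ)-1) ≤ (s:ℝ) * (Real.log k)^2 / ((t:ℝ)-1) :=
                div_le_div₀ (by positivity) h1 ht1pos le_rfl
          _ ≤ (s:ℝ) * (Real.log k)^2 / (2*(s:ℝ)) :=
                div_le_div_of_nonneg_left (by positivity) (by linarith) htlb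
          _ = (Real.log k)^2 / 2 := by
                field_simp
        have hYfin : (2/9) * (Real.log Dr)^2 ≤ Y / ((t:ℝ)-1) := by
          have h1 : (2/9) * (Real.log Dr)^2 ≤ ((u:ℝ)-1) * (Real.log Dr)^2 / (3*(u:ℝ)) := by
            rw [le_div_iff₀ (by linarith)]
            calc 2 / 9 * Real.log Dr ^ 2 * (3 * (u:ℝ))
                = ((2/9) * (3*(u:ℝ))) * (Real.log Dr)^2 := by ring
            _ ≤ ((u:ℝ) - 1) * (Real.log Dr)^2 :=
                mul_le_mul_of_nonneg_right (by linarith) (sq_nonneg _)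
          have h0Y : (0:ℝ) ≤ ((u:ℝ)-1) * (Real.log Dr)^2 :=
            mul_nonneg (by linarith) (sq_nonneg _)
          have h2 : ((u:ℝ)-1) * (Real.log Dr)^2 / (3*(u:ℝ)) ≤ Y / ((t:ℝ)-1) :=
            div_le_div₀ (le_trans h0Y hYge) hYge ht1pos htub
          linarith
        have hfin : X / ((t:ℝ)-1) ≤ β^2 * (Y / ((t:ℝ)-1)) := by
          have h16 : (4 * Real.log k)^2 ≤ (β * Real.log Dr)^2 :=
            pow_le_pow_left₀ (by positivity) hlogk_a 2
          have h5 : (Real.log k)^2 / 2 ≤ β^2 * ((2/9) * (Real.log Dr)^2) := by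
            have e1 : (4 * Real.log k)^2 = 16 * (Real.log k)^2 := by ring
            have e2 : (β * Real.log Dr)^2 = β^2 * (Real.log Dr)^2 := by ring
            have hnn : (0:ℝ) ≤ β^2 * (Real.log Dr)^2 := by positivity
            linarith [h16]
          have h6 : β^2 * ((2/9) * (Real.log Dr)^2) ≤ β^2 * (Y / ((t:ℝ)-1)) :=
            mul_le_mul_of_nonneg_left hYfin (sq_nonneg β)
          linarith
        calc Real.sqrt (X / ((t:ℝ)-1)) ≤ Real.sqrt (β^2 * (Y / ((t:ℝ)-1))) :=
              Real.sqrt_le_sqrt hfin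
        _ = β * Real.sqrt (Y / ((t:ℝ)-1)) := by
              rw [Real.sqrt_mul (sq_nonneg β), Real.sqrt_sq hβ.le]
  · -- ### backward direction
    rintro ⟨T, hTm, hTcard, hperf, _⟩
    have hTne : ((T.card : ℕ) : ℝ) = (k:ℝ) := by rw [hTcard]
    have hφT0 : phi1 Sp T 0 = v₁ := by
      rw [phi1, hST0 T hTm, hTne]
      field_simp
    -- T consists of coding rows only
    have hTn : T ⊆ Finset.Icc 1 n := by
      by_contra hcon
      have hspec : ∀ i, 1 ≤ i → i ≤ k + 1 → n + i ∈ T := by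
        intro i hi1 hi2
        have hnim : n + i ≤ m := by
          have : n * 2 ≤ n * B := Nat.mul_le_mul_left n hB2n
          omega
        have hmin : min (n + (2*i) / 2) m = n + i := by
          rw [Nat.mul_div_cancel_left i (by norm_num)]
          omega
        by_contra hniT
        -- compute phi1 T (2*i)
        have ht1 : 1 ≤ 2*i := by omega
        have ht2 : 2*i ≤ P := by omega
        have ht3 : (2*i) % 2 = 0 := by omega
        have hsum : ∑ x ∈ T, Sp x (2*i) =
            ((T.filter (fun x => x ≤ n)).card : ℝ) * v₁ := by
          have hstep : ∀ x ∈ T, Sp x (2*i) = if x ≤ n then v₁ else 0 := by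
            intro x hx
            have hxm := hTm hx
            rw [Finset.mem_Icc] at hxm
            by_cases hxn : x ≤ n
            · rw [if_pos hxn]
              exact hpad1 (2*i) ht1 ht2 x (Finset.mem_Icc.mpr ⟨hxm.1, hxn⟩)
            · rw [if_neg hxn]
              refine (hpadEven (2*i) ht1 ht2 ht3).2 x (by omega) hxm.2 ?_
              rw [hmin]
              intro hxe
              exact hniT (hxe ▸ hx)
          rw [Finset.sum_congr rfl hstep, ← Finset.sum_filter, Finset.sum_const,
            nsmul_eq_mul]
        have hpf := hperf (2*i) (Finset.mem_Icc.mpr ⟨by omega, by omega⟩)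
        rw [hφT0, hφM0, hφMeven (2*i) ht1 ht2 ht3] at hpf
        rw [phi1, hsum, hTne] at hpf
        have h2 : α * (v₁ * Dr / B / v₁) = α * Dr / B := by field_simp
        rw [h2] at hpf
        set c := (T.filter (fun x => x ≤ n)).card with hc
        have hck : ((c:ℕ):ℝ) ≤ (k:ℝ) - 1 ∨ c = k := by
          have hle : c ≤ k := by
            rw [← hTcard]; exact Finset.card_le_card (Finset.filter_subset _ _)
          rcases Nat.lt_or_ge c k with h | h
          · left
            have h'' : ((c:ℕ):ℝ) + 1 ≤ (k:ℝ) := by exact_mod_cast h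
            linarith
          · right; omega
        rcases hck with h | h
        · -- contradiction with the performance bound
          have hratio : ((c:ℕ):ℝ) * v₁ / v₁ / v₁ = ((c:ℕ):ℝ) / v₁ := by
            field_simp
          -- hpf : (c * v₁ / k) / v₁ ≥ α * Dr / B
          have hpf' : ((c:ℕ):ℝ) / (k:ℝ) ≥ α * Dr / B := by
            have : ((c:ℕ):ℝ) * v₁ / (k:ℝ) / v₁ = ((c:ℕ):ℝ) / (k:ℝ) := by
              field_simp
            rwa [this] at hpf
          rw [ge_iff_le, div_le_div_iff₀ hB0 hk0] at hpf'
          -- α*Dr*k ≤ c*B ≤ (k-1)*B < k*α*Dr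
          have h3 : ((c:ℕ):ℝ) * B ≤ ((k:ℝ) - 1) * B :=
            mul_le_mul_of_nonneg_right (by linarith) hB0.le
          linarith
        · -- then T ⊆ Icc 1 n, contradiction
          exfalso
          apply hcon
          have hfeq : T.filter (fun x => x ≤ n) = T :=
            Finset.eq_of_subset_of_card_le (Finset.filter_subset _ _)
              (by rw [hTcard, ← hc, h])
          intro x hx
          have hxm := hTm hx
          rw [Finset.mem_Icc] at hxm
          rw [← hfeq] at hx
          rw [Finset.mem_Icc]
          exact ⟨hxm.1, (Finset.mem_filter.mp hx).2⟩
      -- pigeonhole: k+1 distinct elements in T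
      have himg : (Finset.Icc 1 (k+1)).image (fun i => n + i) ⊆ T := by
        intro x hx
        rw [Finset.mem_image] at hx
        obtain ⟨i, hi, rfl⟩ := hx
        rw [Finset.mem_Icc] at hi
        exact hspec i hi.1 hi.2
      have hcard : k + 1 ≤ T.card := by
        calc k + 1 = ((Finset.Icc 1 (k+1)).image (fun i => n + i)).card := by
              rw [Finset.card_image_of_injective _ (fun a b hab => by omega), hcardIcc]
        _ ≤ T.card := Finset.card_le_card himg
      omega
    -- extract the cover
    refine ⟨T, hTn, by omega, ?_⟩
    intro j hj
    rw [Finset.mem_Icc] at hj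
    have hpf := hperf (P + j) (Finset.mem_Icc.mpr ⟨by omega, by omega⟩)
    rw [hφT0, hφM0, hφMcode j hj.1 hj.2] at hpf
    rw [phi1, hSTcode j hj.1 hj.2 T hTn, hTne, hv₂k] at hpf
    have h2 : α * (v₁ * Dr / B / v₁) = α * Dr / B := by field_simp
    rw [h2] at hpf
    set c := (T.filter (fun i => j ∈ C i)).card with hc
    have hpf' : ((c:ℕ):ℝ) ≥ α * Dr / B := by
      have : ((c:ℕ):ℝ) * ((k:ℝ) * v₁) / (k:ℝ) / v₁ = ((c:ℕ):ℝ) := by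
        field_simp
      rwa [this] at hpf
    have hcpos : 0 < c := by
      by_contra hc0
      push_neg at hc0
      interval_cases c
      · simp only [Nat.cast_zero, ge_iff_le] at hpf'
        have : 0 < α * Dr / B := by positivity
        linarith
    obtain ⟨i, hi⟩ := Finset.card_pos.mp hcpos
    rw [Finset.mem_filter] at hi
    exact ⟨i, hi.1, hi.2⟩
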